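/- Fix n, n_u, n_y ∈ ℕ, matrices A ∈ ℝ^{n×n}, B ∈ ℝ^{n×n_u}, C ∈ ℝ^{n_y×n}, D ∈ ℝ^{n_y×n_u}, with (A,B) controllable. Let (u^d, y^d) be a trajectory of length N of the LTI system (A,B,C,D), let 1 ≤ ℓ ≤ N, and assume u^d is persistently exciting of order ℓ + n. Then a pair of sequences (u, y) of length ℓ is a trajectory of the LTI system (A,B,C,D) if and only if there exists α ∈ ℝ^{N−ℓ+1} such that H_ℓ(u^d) α = u and H_ℓ(y^d) α = y (with u and y viewed as stacked vectors in ℝ^{ℓ n_u} and ℝ^{ℓ n_y}). -/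

import Mathlib

open Matrix

/-- `(u, y)` is a trajectory of length `N` of the LTI system `(A, B, C, D)`. -/
def IsTrajectory {n nu ny : ℕ} (A : Matrix (Fin n) (Fin n) ℝ) (B : Matrix (Fin n) (Fin nu) ℝ)
    (C : Matrix (Fin ny) (Fin n) ℝ) (D : Matrix (Fin ny) (Fin nu) ℝ) (N : ℕ)
    (u : ℕ → Fin nu → ℝ) (y : ℕ → Fin ny → ℝ) : Prop :=
  ∃ x : ℕ → Fin n → ℝ,
    (∀ t, t + 1 < N → x (t + 1) = A.mulVec (x t) + B.mulVec (u t)) ∧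
    (∀ t, t < N → y t = C.mulVec (x t) + D.mulVec (u t))

/-- The Hankel matrix of depth `ℓ` with `m = N - ℓ + 1` columns of a vector sequence `z`. -/
def hankel {nz : ℕ} (ℓ m : ℕ) (z : ℕ → Fin nz → ℝ) : Matrix (Fin ℓ × Fin nz) (Fin m) ℝ :=
  Matrix.of fun p j => z ((p.1 : ℕ) + (j : ℕ)) p.2

/-- The controllability matrix `[B, AB, …, A^{n-1}B]`. -/
def ctrbMat {n nu : ℕ} (A : Matrix (Fin n) (Fin n) ℝ) (B : Matrix (Fin n) (Fin nu) ℝ) :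
    Matrix (Fin n) (Fin n × Fin nu) ℝ :=
  Matrix.of fun i p => (A ^ (p.1 : ℕ) * B) i p.2

/-! ### Auxiliary lemmas -/

lemma FL.fullrow_inj {m k : Type*} [Fintype m] [Fintype k] [DecidableEq m] [DecidableEq k]
    (M : Matrix m k ℝ) (h : M.rank = Fintype.card m) (v : m → ℝ) (hv : v ᵥ* M = 0) : v = 0 := by
  have hrt : Mᵀ.rank = Fintype.card m := by rw [Matrix.rank_transpose]; exact h
  have hker : LinearMap.ker Mᵀ.mulVecLin = ⊥ := by
    have := Mᵀ.mulVecLin.finrank_range_add_finrank_ker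
    rw [Matrix.rank] at hrt
    have hdom : Module.finrank ℝ (m → ℝ) = Fintype.card m := Module.finrank_fintype_fun_eq_card ℝ
    rw [hrt, hdom] at this
    have : Module.finrank ℝ (LinearMap.ker Mᵀ.mulVecLin) = 0 := by omega
    exact Submodule.finrank_eq_zero.mp this
  have h2 : Mᵀ *ᵥ v = 0 := by rw [Matrix.mulVec_transpose]; exact hv
  have h3 : v ∈ LinearMap.ker Mᵀ.mulVecLin := h2
  rw [hker] at h3; simpa using h3

lemma FL.mulVec_surj {m k : Type*} [Fintype m] [Fintype k] [DecidableEq m] [DecidableEq k]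
    (M : Matrix m k ℝ) (h : ∀ v, v ᵥ* M = 0 → v = 0) : Function.Surjective M.mulVec := by
  have hinj : Function.Injective Mᵀ.mulVecLin := by
    rw [← LinearMap.ker_eq_bot, Submodule.eq_bot_iff]
    intro v hv
    exact h v (by rw [← Matrix.mulVec_transpose]; exact hv)
  have h1 : Mᵀ.rank = Fintype.card m := by
    rw [Matrix.rank, LinearMap.finrank_range_of_inj hinj]
    exact Module.finrank_fintype_fun_eq_card ℝ
  have h2 : M.rank = Fintype.card m := by rw [← Matrix.rank_transpose]; exact h1
  have htop : LinearMap.range M.mulVecLin = ⊤ := by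
    apply Submodule.eq_top_of_finrank_eq
    rw [← Matrix.rank, h2, Module.finrank_fintype_fun_eq_card ℝ]
  intro b
  obtain ⟨a, ha⟩ := htop ▸ Submodule.mem_top (x := b) (R := ℝ)
  exact ⟨a, ha⟩

lemma FL.sum_dot {n : ℕ} {ι : Type*} (s : Finset ι) (f : ι → Fin n → ℝ) (w : Fin n → ℝ) :
    (∑ i ∈ s, f i) ⬝ᵥ w = ∑ i ∈ s, f i ⬝ᵥ w := by
  simp only [dotProduct, Finset.sum_apply, Finset.sum_mul]
  exact Finset.sum_comm

lemma FL.smul_dot {n : ℕ} (c : ℝ) (v w : Fin n → ℝ) : (c • v) ⬝ᵥ w = c * (v ⬝ᵥ w) := by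
  simp [dotProduct, Finset.mul_sum, mul_assoc]

lemma FL.dot_sum {n : ℕ} {ι : Type*} (s : Finset ι) (v : Fin n → ℝ) (f : ι → Fin n → ℝ) :
    v ⬝ᵥ (∑ i ∈ s, f i) = ∑ i ∈ s, v ⬝ᵥ f i := by
  simp only [dotProduct, Finset.sum_apply, Finset.mul_sum]
  exact Finset.sum_comm

lemma FL.sum_vecMul' {n k : ℕ} {ι : Type*} (s : Finset ι) (f : ι → Fin n → ℝ)
    (M : Matrix (Fin n) (Fin k) ℝ) : (∑ i ∈ s, f i) ᵥ* M = ∑ i ∈ s, (f i) ᵥ* M := by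
  ext j
  simp only [Matrix.vecMul, Finset.sum_apply]
  exact FL.sum_dot s f _

lemma FL.smul_vecMul' {n k : ℕ} (c : ℝ) (v : Fin n → ℝ) (M : Matrix (Fin n) (Fin k) ℝ) :
    (c • v) ᵥ* M = c • (v ᵥ* M) := by
  ext j
  simp only [Matrix.vecMul, Pi.smul_apply, smul_eq_mul]
  exact FL.smul_dot c v _

lemma FL.hankel_mulVec {nz ℓ m : ℕ} (z : ℕ → Fin nz → ℝ) (α : Fin m → ℝ) (p : Fin ℓ × Fin nz) :
    ((hankel ℓ m z) *ᵥ α) p = (∑ j : Fin m, α j • z ((p.1 : ℕ) + (j : ℕ))) p.2 := by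
  simp [hankel, Matrix.mulVec, dotProduct, Finset.sum_apply, mul_comm]

lemma FL.mulVec_combo {n nu : ℕ} (A : Matrix (Fin n) (Fin nu) ℝ) {ι : Type*} (s : Finset ι)
    (α : ι → ℝ) (v : ι → Fin nu → ℝ) :
    A *ᵥ (∑ j ∈ s, α j • v j) = ∑ j ∈ s, α j • (A *ᵥ v j) := by
  rw [← A.mulVecLin_apply, map_sum]
  simp [Matrix.mulVecLin_apply]

lemma FL.mulVec_sum' {n p : ℕ} (A : Matrix (Fin n) (Fin p) ℝ) {ι : Type*} (s : Finset ι)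
    (v : ι → Fin p → ℝ) : A *ᵥ (∑ j ∈ s, v j) = ∑ j ∈ s, A *ᵥ v j := by
  rw [← A.mulVecLin_apply, map_sum]; simp [Matrix.mulVecLin_apply]

/-- Linear combinations of time-shifted data trajectories satisfy the system equations. -/
lemma FL.combo_traj {n nu ny : ℕ}
    (A : Matrix (Fin n) (Fin n) ℝ) (B : Matrix (Fin n) (Fin nu) ℝ)
    (C : Matrix (Fin ny) (Fin n) ℝ) (D : Matrix (Fin ny) (Fin nu) ℝ)
    (N : ℕ) (ud : ℕ → Fin nu → ℝ) (yd : ℕ → Fin ny → ℝ) (xd : ℕ → Fin n → ℝ)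
    (hxd : ∀ t, t + 1 < N → xd (t + 1) = A *ᵥ xd t + B *ᵥ ud t)
    (hyd : ∀ t, t < N → yd t = C *ᵥ xd t + D *ᵥ ud t)
    (ℓ : ℕ) (hℓN : ℓ ≤ N) (α : Fin (N - ℓ + 1) → ℝ) :
    (∀ t, t + 1 < ℓ →
      (∑ j : Fin (N - ℓ + 1), α j • xd (t + 1 + (j : ℕ)))
        = A *ᵥ (∑ j : Fin (N - ℓ + 1), α j • xd (t + (j : ℕ)))
          + B *ᵥ (∑ j : Fin (N - ℓ + 1), α j • ud (t + (j : ℕ)))) ∧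
    (∀ t, t < ℓ →
      (∑ j : Fin (N - ℓ + 1), α j • yd (t + (j : ℕ)))
        = C *ᵥ (∑ j : Fin (N - ℓ + 1), α j • xd (t + (j : ℕ)))
          + D *ᵥ (∑ j : Fin (N - ℓ + 1), α j • ud (t + (j : ℕ)))) := by
  have hj : ∀ j : Fin (N - ℓ + 1), (j : ℕ) ≤ N - ℓ := fun j => by
    have := j.isLt; omega
  constructor
  · intro t ht
    rw [FL.mulVec_combo, FL.mulVec_combo, ← Finset.sum_add_distrib]
    apply Finset.sum_congr rfl
    intro j _
    have h1 : t + (j : ℕ) + 1 < N := by have := hj j; omega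
    have h2 : t + 1 + (j : ℕ) = t + (j : ℕ) + 1 := by omega
    rw [h2, hxd _ h1, smul_add]
  · intro t ht
    rw [FL.mulVec_combo, FL.mulVec_combo, ← Finset.sum_add_distrib]
    apply Finset.sum_congr rfl
    intro j _
    have h1 : t + (j : ℕ) < N := by have := hj j; omega
    rw [hyd _ h1, smul_add]

/-- Existence of a monic annihilating combination of `ξᵀAˢ`, `s ≤ d`, for some `d ≤ n`. -/
lemma FL.exists_monic_ann {n : ℕ} (A : Matrix (Fin n) (Fin n) ℝ) (ξ : Fin n → ℝ) :
    ∃ d ≤ n, ∃ a : ℕ → ℝ, a d = 1 ∧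
      ∑ s ∈ Finset.range (d + 1), a s • (ξ ᵥ* (A ^ s)) = 0 := by
  set w : ℕ → (Fin n → ℝ) := fun s => ξ ᵥ* (A ^ s) with hw
  have hnotli : ¬ LinearIndependent ℝ (fun s : Fin (n+1) => w s) := by
    intro hli
    have := hli.fintype_card_le_finrank
    simp [Module.finrank_fintype_fun_eq_card] at this
  obtain ⟨c, hcsum, i0, hi0⟩ := Fintype.not_linearIndependent_iff.mp hnotli
  set c' : ℕ → ℝ := fun k => if h : k < n + 1 then c ⟨k, h⟩ else 0 with hc'
  set S : Finset ℕ := (Finset.range (n+1)).filter (fun k => c' k ≠ 0) with hS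
  have hSne : S.Nonempty := ⟨(i0 : ℕ), by
    simp only [hS, Finset.mem_filter, Finset.mem_range]
    exact ⟨i0.isLt, by simp [hc', i0.isLt, hi0, Nat.lt_succ_iff.mp i0.isLt]⟩⟩
  set d := S.max' hSne with hd
  have hdS : d ∈ S := S.max'_mem hSne
  have hdn : d ≤ n := by
    have := Finset.mem_range.mp (Finset.mem_filter.mp hdS).1; omega
  have hcd : c' d ≠ 0 := (Finset.mem_filter.mp hdS).2
  have hzero : ∀ k, d < k → c' k = 0 := by
    intro k hk
    by_cases hk2 : k < n + 1
    · by_contra hne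
      have : k ∈ S := Finset.mem_filter.mpr ⟨Finset.mem_range.mpr hk2, hne⟩
      exact absurd (S.le_max' k this) (by omega)
    · simp [hc', hk2, show ¬ k ≤ n by omega]
  have hsum' : ∑ s ∈ Finset.range (d + 1), c' s • w s = 0 := by
    have h1 : ∑ s ∈ Finset.range (n + 1), c' s • w s = 0 := by
      rw [Finset.sum_range (fun s => c' s • w s)]
      simpa [hc', Fin.is_lt, fun i : Fin (n+1) => Nat.lt_succ_iff.mp i.isLt] using hcsum
    calc ∑ s ∈ Finset.range (d + 1), c' s • w s
        = ∑ s ∈ Finset.range (n + 1), c' s • w s := by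
          apply Finset.sum_subset (Finset.range_subset_range.mpr (by omega))
          intro x _ hx
          rw [hzero x (by simp at hx ⊢; omega)]; simp
      _ = 0 := h1
  refine ⟨d, hdn, fun k => (c' d)⁻¹ * c' k, by field_simp, ?_⟩
  have : ∑ s ∈ Finset.range (d + 1), ((c' d)⁻¹ * c' s) • w s
      = (c' d)⁻¹ • ∑ s ∈ Finset.range (d + 1), c' s • w s := by
    rw [Finset.smul_sum]; exact Finset.sum_congr rfl fun s _ => (smul_smul _ _ _).symm
  rw [this, hsum', smul_zero]

/-- Explicit solution of the state recursion. -/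
lemma FL.state_exp {n nu N : ℕ} (A : Matrix (Fin n) (Fin n) ℝ) (B : Matrix (Fin n) (Fin nu) ℝ)
    (ud : ℕ → Fin nu → ℝ) (xd : ℕ → Fin n → ℝ)
    (hxd : ∀ t, t + 1 < N → xd (t + 1) = A *ᵥ xd t + B *ᵥ ud t) :
    ∀ s j, j + s < N → xd (j + s) =
      (A ^ s) *ᵥ xd j + ∑ i ∈ Finset.range s, (A ^ (s - 1 - i) * B) *ᵥ ud (j + i) := by
  intro s
  induction s with
  | zero => intro j _; simp
  | succ s ih =>
    intro j hjs
    have h2 : xd (j + (s+1)) = A *ᵥ xd (j + s) + B *ᵥ ud (j + s) := by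
      have h := hxd (j + s) (by omega)
      rw [← h]; ring_nf
    rw [h2, ih j (by omega), Matrix.mulVec_add, FL.mulVec_sum']
    rw [Finset.sum_range_succ]
    have e1 : A *ᵥ A ^ s *ᵥ xd j = A ^ (s+1) *ᵥ xd j := by
      rw [Matrix.mulVec_mulVec, ← pow_succ']
    have e2 : ∀ i ∈ Finset.range s,
        A *ᵥ (A ^ (s - 1 - i) * B) *ᵥ ud (j + i) = (A ^ (s + 1 - 1 - i) * B) *ᵥ ud (j + i) := by
      intro i hi
      rw [Finset.mem_range] at hi
      rw [Matrix.mulVec_mulVec, ← Matrix.mul_assoc, ← pow_succ']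
      have he : s - 1 - i + 1 = s + 1 - 1 - i := by omega
      rw [he]
    rw [Finset.sum_congr rfl e2] at *
    rw [e1]
    have e3 : (A ^ (s + 1 - 1 - s) * B) *ᵥ ud (j + s) = B *ᵥ ud (j + s) := by
      simp
    rw [e3]
    abel

/-- Core lemma: triviality of the left kernel of the Hankel matrix stacked with the states. -/
lemma FL.core {n nu N : ℕ}
    (A : Matrix (Fin n) (Fin n) ℝ) (B : Matrix (Fin n) (Fin nu) ℝ)
    (hctrb : (ctrbMat A B).rank = n)
    (ud : ℕ → Fin nu → ℝ) (xd : ℕ → Fin n → ℝ)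
    (hxd : ∀ t, t + 1 < N → xd (t + 1) = A *ᵥ xd t + B *ᵥ ud t)
    (ℓ : ℕ) (hℓ : 1 ≤ ℓ) (hN : ℓ + n ≤ N)
    (hPE : (hankel (ℓ + n) (N - (ℓ + n) + 1) ud).rank = (ℓ + n) * nu)
    (η : ℕ → Fin nu → ℝ) (hηz : ∀ k, ℓ ≤ k → η k = 0) (ξ : Fin n → ℝ)
    (hv : ∀ t, t ≤ N - ℓ →
      (∑ k ∈ Finset.range ℓ, η k ⬝ᵥ ud (k + t)) + ξ ⬝ᵥ xd t = 0) :
    (∀ k, η k = 0) ∧ ξ = 0 := by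
  obtain ⟨d, hdn, a, had, hann⟩ := FL.exists_monic_ann A ξ
  set g : ℕ → ℕ → (Fin nu → ℝ) := fun s p =>
    (if s ≤ p then η (p - s) else 0) + (if p < s then ξ ᵥ* (A ^ (s - 1 - p) * B) else 0)
    with hg
  set βf : ℕ → Fin nu → ℝ := fun p => ∑ s ∈ Finset.range (d + 1), a s • g s p with hβf
  -- Step A : each column of the big Hankel matrix is annihilated by βf
  have hcol : ∀ j, j ≤ N - (ℓ + n) →
      ∑ p ∈ Finset.range (ℓ + n), βf p ⬝ᵥ ud (p + j) = 0 := by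
    intro j hj
    have hswap : ∑ p ∈ Finset.range (ℓ + n), βf p ⬝ᵥ ud (p + j)
        = ∑ s ∈ Finset.range (d + 1), a s *
            (∑ p ∈ Finset.range (ℓ + n), g s p ⬝ᵥ ud (p + j)) := by
      have h1 : ∀ p, βf p ⬝ᵥ ud (p + j)
          = ∑ s ∈ Finset.range (d + 1), a s * (g s p ⬝ᵥ ud (p + j)) := by
        intro p
        rw [hβf]
        rw [FL.sum_dot]
        exact Finset.sum_congr rfl fun s _ => FL.smul_dot _ _ _
      rw [Finset.sum_congr rfl fun p _ => h1 p, Finset.sum_comm]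
      exact Finset.sum_congr rfl fun s _ => (Finset.mul_sum _ _ _).symm
    rw [hswap]
    have hterm : ∀ s ∈ Finset.range (d + 1),
        ∑ p ∈ Finset.range (ℓ + n), g s p ⬝ᵥ ud (p + j)
          = -((ξ ᵥ* (A ^ s)) ⬝ᵥ xd j) := by
      intro s hs
      rw [Finset.mem_range] at hs
      have hsn : s ≤ n := by omega
      have hsplit : ∑ p ∈ Finset.range (ℓ + n), g s p ⬝ᵥ ud (p + j)
          = (∑ p ∈ Finset.range (ℓ + n), (if s ≤ p then η (p - s) ⬝ᵥ ud (p + j) else 0))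
            + (∑ p ∈ Finset.range (ℓ + n), (if p < s then (ξ ᵥ* (A ^ (s - 1 - p) * B)) ⬝ᵥ ud (p + j) else 0)) := by
        rw [← Finset.sum_add_distrib]
        apply Finset.sum_congr rfl
        intro p _
        rw [hg]
        simp only
        rw [add_dotProduct]
        congr 1
        · split <;> simp [zero_dotProduct]
        · split <;> simp [zero_dotProduct]
      rw [hsplit]
      -- first sum
      have hfirst : (∑ p ∈ Finset.range (ℓ + n), (if s ≤ p then η (p - s) ⬝ᵥ ud (p + j) else 0))
          = ∑ k ∈ Finset.range ℓ, η k ⬝ᵥ ud (k + (j + s)) := by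
        rw [Finset.range_eq_Ico]
        rw [← Finset.sum_Ico_consecutive _ (Nat.zero_le s) (by omega : s ≤ ℓ + n)]
        have hz1 : ∑ p ∈ Finset.Ico 0 s, (if s ≤ p then η (p - s) ⬝ᵥ ud (p + j) else 0) = 0 := by
          apply Finset.sum_eq_zero
          intro p hp
          rw [Finset.mem_Ico] at hp
          rw [if_neg (by omega)]
        rw [hz1, zero_add]
        have hz2 : ∑ p ∈ Finset.Ico s (ℓ + n), (if s ≤ p then η (p - s) ⬝ᵥ ud (p + j) else 0)
            = ∑ p ∈ Finset.Ico s (ℓ + n), η (p - s) ⬝ᵥ ud (p + j) := by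
          apply Finset.sum_congr rfl
          intro p hp
          rw [Finset.mem_Ico] at hp
          rw [if_pos hp.1]
        rw [hz2, Finset.sum_Ico_eq_sum_range]
        have hz3 : ∀ k ∈ Finset.range (ℓ + n - s), η (s + k - s) ⬝ᵥ ud (s + k + j)
            = (if k < ℓ then η k ⬝ᵥ ud (k + (j + s)) else 0) := by
          intro k hk
          have : s + k - s = k := by omega
          rw [this]
          have : s + k + j = k + (j + s) := by omega
          rw [this]
          split
          · rfl
          · rw [hηz k (by omega), zero_dotProduct]
        rw [Finset.sum_congr rfl hz3]
        rw [← Finset.sum_filter]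
        congr 1
        ext k
        simp only [Finset.mem_filter, Finset.mem_range, Finset.mem_Ico]
        omega
      -- second sum
      have hsecond : (∑ p ∈ Finset.range (ℓ + n), (if p < s then (ξ ᵥ* (A ^ (s - 1 - p) * B)) ⬝ᵥ ud (p + j) else 0))
          = ξ ⬝ᵥ (∑ i ∈ Finset.range s, (A ^ (s - 1 - i) * B) *ᵥ ud (j + i)) := by
        rw [FL.dot_sum]
        rw [← Finset.sum_filter]
        have hfe : Finset.filter (fun p => p < s) (Finset.range (ℓ + n)) = Finset.range s := by
          ext k
          simp only [Finset.mem_filter, Finset.mem_range, Finset.mem_Ico]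
          omega
        rw [hfe]
        apply Finset.sum_congr rfl
        intro i _
        rw [Nat.add_comm i j, Matrix.dotProduct_mulVec]
      rw [hfirst, hsecond]
      have hEq := hv (j + s) (by omega)
      have hxe := FL.state_exp A B ud xd hxd s j (by omega)
      rw [hxe, dotProduct_add, FL.dot_sum] at hEq
      rw [Matrix.dotProduct_mulVec] at hEq
      rw [FL.dot_sum]
      linarith [hEq]
    calc ∑ s ∈ Finset.range (d + 1), a s * ∑ p ∈ Finset.range (ℓ + n), g s p ⬝ᵥ ud (p + j)
        = ∑ s ∈ Finset.range (d + 1), a s * -((ξ ᵥ* (A ^ s)) ⬝ᵥ xd j) :=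
          Finset.sum_congr rfl fun s hs => by rw [hterm s hs]
      _ = -((∑ s ∈ Finset.range (d + 1), a s • (ξ ᵥ* (A ^ s))) ⬝ᵥ xd j) := by
          rw [FL.sum_dot, ← Finset.sum_neg_distrib]
          apply Finset.sum_congr rfl
          intro s _
          rw [FL.smul_dot]
          ring
      _ = 0 := by rw [hann, zero_dotProduct, neg_zero]
  -- Step B : βf vanishes, by persistency of excitation
  have hβ0 : ∀ p, p < ℓ + n → ∀ q, βf p q = 0 := by
    set H := hankel (ℓ + n) (N - (ℓ + n) + 1) ud with hH
    set β : Fin (ℓ + n) × Fin nu → ℝ := fun pq => βf (pq.1 : ℕ) pq.2 with hβ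
    have hβH : β ᵥ* H = 0 := by
      funext j
      have hjle : (j : ℕ) ≤ N - (ℓ + n) := by have := j.isLt; omega
      have : (β ᵥ* H) j = ∑ p ∈ Finset.range (ℓ + n), βf p ⬝ᵥ ud (p + (j : ℕ)) := by
        simp only [Matrix.vecMul, dotProduct, hH, hankel, Matrix.of_apply, hβ]
        rw [Fintype.sum_prod_type, ← Finset.sum_range
          (fun p => ∑ q : Fin nu, βf p q * ud (p + (j : ℕ)) q)]
      rw [this, hcol (j : ℕ) hjle]
      rfl
    have hcard : H.rank = Fintype.card (Fin (ℓ + n) × Fin nu) := by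
      rw [hPE]; simp
    have := FL.fullrow_inj H hcard β hβH
    intro p hp q
    have := congrFun this (⟨⟨p, hp⟩, q⟩ : Fin (ℓ + n) × Fin nu)
    simpa [hβ] using this
  -- Step C : η vanishes
  have hη0 : ∀ k, η k = 0 := by
    have Hc : ∀ c k, ℓ ≤ k + c → η k = 0 := by
      intro c
      induction c with
      | zero => intro k hk; exact hηz k (by omega)
      | succ c ih =>
        intro k hk
        by_cases hkc : ℓ ≤ k + c
        · exact ih k hkc
        · have hkl : k < ℓ := by omega
          funext q
          have hp : d + k < ℓ + n := by omega
          have h0 := hβ0 (d + k) hp q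
          rw [hβf] at h0
          simp only [Finset.sum_apply, Pi.smul_apply, smul_eq_mul] at h0
          have hgs : ∀ s ∈ Finset.range (d + 1), a s * g s (d + k) q = a s * η (d + k - s) q := by
            intro s hs
            rw [Finset.mem_range] at hs
            rw [hg]
            simp only [Pi.add_apply]
            rw [if_pos (by omega : s ≤ d + k), if_neg (by omega : ¬ d + k < s)]
            simp
          rw [Finset.sum_congr rfl hgs, Finset.sum_range_succ] at h0
          have hzz : ∀ s ∈ Finset.range d, a s * η (d + k - s) q = 0 := by
            intro s hs
            rw [Finset.mem_range] at hs
            rw [ih (d + k - s) (by omega)]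
            simp
          rw [Finset.sum_congr rfl hzz, Finset.sum_const_zero, zero_add] at h0
          have : d + k - d = k := by omega
          rw [this, had, one_mul] at h0
          simpa using h0
    exact fun k => Hc ℓ k (by omega)
  -- Step D : ξᵀ Aᵏ B = 0 for k < d
  have hkd : ∀ k, k < d → ξ ᵥ* (A ^ k * B) = 0 := by
    intro k
    induction k using Nat.strong_induction_on with
    | _ k IH =>
      intro hkdlt
      funext q
      have hp : d - 1 - k < ℓ + n := by omega
      have h0 := hβ0 (d - 1 - k) hp q
      rw [hβf] at h0
      simp only [Finset.sum_apply, Pi.smul_apply, smul_eq_mul] at h0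
      set p := d - 1 - k with hpdef
      have hgs : ∀ s ∈ Finset.range (d + 1), a s * g s p q
          = a s * (if p < s then (ξ ᵥ* (A ^ (s - 1 - p) * B)) q else 0) := by
        intro s hs
        rw [hg]
        simp only [Pi.add_apply, hη0, Pi.zero_apply, zero_add,
          apply_ite (fun (f : Fin nu → ℝ) => f q), ite_self]
      rw [Finset.sum_congr rfl hgs, Finset.sum_range_succ] at h0
      have hzz : ∀ s ∈ Finset.range d,
          a s * (if p < s then (ξ ᵥ* (A ^ (s - 1 - p) * B)) q else 0) = 0 := by
        intro s hs
        rw [Finset.mem_range] at hs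
        split
        · next hps =>
          rw [IH (s - 1 - p) (by omega) (by omega)]
          simp
        · simp
      rw [Finset.sum_congr rfl hzz, Finset.sum_const_zero, zero_add] at h0
      rw [if_pos (by omega : p < d), had, one_mul] at h0
      have : d - 1 - p = k := by omega
      rw [this] at h0
      simpa using h0
  -- Step E : ξᵀ Aᵏ B = 0 for all k
  have hall : ∀ k, ξ ᵥ* (A ^ k * B) = 0 := by
    intro k
    induction k using Nat.strong_induction_on with
    | _ k IH =>
      by_cases hlt : k < d
      · exact hkd k hlt
      · have hkdge : d ≤ k := by omega
        have hAd : ξ ᵥ* (A ^ d) = ∑ s ∈ Finset.range d, (-(a s)) • (ξ ᵥ* (A ^ s)) := by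
          rw [Finset.sum_range_succ, had, one_smul] at hann
          have := eq_neg_of_add_eq_zero_right hann
          rw [this, ← Finset.sum_neg_distrib]
          apply Finset.sum_congr rfl
          intro s _
          rw [neg_smul]
        have hsplitpow : A ^ k * B = A ^ d * (A ^ (k - d) * B) := by
          rw [← Matrix.mul_assoc, ← pow_add]
          congr 2
          omega
        rw [hsplitpow, ← Matrix.vecMul_vecMul, hAd, FL.sum_vecMul']
        apply Finset.sum_eq_zero
        intro s hs
        rw [Finset.mem_range] at hs
        rw [FL.smul_vecMul', Matrix.vecMul_vecMul, ← Matrix.mul_assoc, ← pow_add]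
        rw [IH (s + (k - d)) (by omega)]
        simp
  -- Step F : conclude ξ = 0
  refine ⟨hη0, ?_⟩
  have hξM : ξ ᵥ* ctrbMat A B = 0 := by
    funext pq
    have : (ξ ᵥ* ctrbMat A B) pq = (ξ ᵥ* (A ^ (pq.1 : ℕ) * B)) pq.2 := by
      simp [Matrix.vecMul, dotProduct, ctrbMat]
    rw [this, hall]
    rfl
  exact FL.fullrow_inj (ctrbMat A B) (by rw [hctrb]; simp) ξ hξM

/-- Fundamental Lemma (data-driven characterization): if `(A, B)` is controllable,
`(u^d, y^d)` is a trajectory of length `N` and `u^d` is persistently exciting of order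
`ℓ + n`, then `(u, y)` is a trajectory of length `ℓ` iff there exists `α ∈ ℝ^{N-ℓ+1}` with
`H_ℓ(u^d) α = u` and `H_ℓ(y^d) α = y` (as stacked vectors). -/
theorem fundamental_lemma {n nu ny : ℕ}
    (A : Matrix (Fin n) (Fin n) ℝ) (B : Matrix (Fin n) (Fin nu) ℝ)
    (C : Matrix (Fin ny) (Fin n) ℝ) (D : Matrix (Fin ny) (Fin nu) ℝ)
    (hctrb : (ctrbMat A B).rank = n)
    (N : ℕ) (ud : ℕ → Fin nu → ℝ) (yd : ℕ → Fin ny → ℝ)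
    (hdata : IsTrajectory A B C D N ud yd)
    (ℓ : ℕ) (hℓ : 1 ≤ ℓ) (hℓN : ℓ ≤ N)
    (hPE : (hankel (ℓ + n) (N - (ℓ + n) + 1) ud).rank = (ℓ + n) * nu)
    (u : ℕ → Fin nu → ℝ) (y : ℕ → Fin ny → ℝ) :
    IsTrajectory A B C D ℓ u y ↔
      ∃ α : Fin (N - ℓ + 1) → ℝ,
        (hankel ℓ (N - ℓ + 1) ud).mulVec α = (fun p => u (p.1 : ℕ) p.2) ∧
        (hankel ℓ (N - ℓ + 1) yd).mulVec α = (fun p => y (p.1 : ℕ) p.2) := by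
  classical
  obtain ⟨xd, hxd, hyd⟩ := hdata
  -- the assumptions force `ℓ + n ≤ N`
  have hNn : ℓ + n ≤ N := by
    by_cases hnu : nu = 0
    · have hn0 : n = 0 := by
        have h1 := Matrix.rank_le_card_width (ctrbMat A B)
        rw [hctrb] at h1
        simpa [hnu] using h1
      omega
    · by_contra hcon
      push_neg at hcon
      have h1 := Matrix.rank_le_card_width (hankel (ℓ + n) (N - (ℓ + n) + 1) ud)
      rw [hPE, Fintype.card_fin] at h1
      have h2 : N - (ℓ + n) = 0 := by omega
      rw [h2] at h1
      have hmul : ℓ + n ≤ (ℓ + n) * nu := Nat.le_mul_of_pos_right _ (by omega)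
      omega
  -- the linear combination sequences
  set m := N - ℓ + 1 with hm
  have hcombo := FL.combo_traj A B C D N ud yd xd hxd hyd ℓ hℓN
  constructor
  · -- forward direction
    rintro ⟨x, hxrec, hxout⟩
    set M : Matrix ((Fin ℓ × Fin nu) ⊕ Fin n) (Fin (N - ℓ + 1)) ℝ :=
      Matrix.of fun r j =>
        Sum.elim (fun p : Fin ℓ × Fin nu => ud ((p.1 : ℕ) + (j : ℕ)) p.2)
          (fun i => xd (j : ℕ) i) r with hMdef
    have hsurj : Function.Surjective M.mulVec := by
      apply FL.mulVec_surj
      intro v hv0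
      set η : ℕ → Fin nu → ℝ :=
        fun k q => if h : k < ℓ then v (Sum.inl (⟨k, h⟩, q)) else 0 with hη
      set ξ : Fin n → ℝ := fun i => v (Sum.inr i) with hξ
      have hηz : ∀ k, ℓ ≤ k → η k = 0 := by
        intro k hk; funext q; simp [hη, Nat.not_lt.mpr hk]
      have hveq : ∀ t, t ≤ N - ℓ →
          (∑ k ∈ Finset.range ℓ, η k ⬝ᵥ ud (k + t)) + ξ ⬝ᵥ xd t = 0 := by
        intro t ht
        have hcong := congrFun hv0 (⟨t, by omega⟩ : Fin (N - ℓ + 1))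
        have hexp : (v ᵥ* M) (⟨t, by omega⟩ : Fin (N - ℓ + 1))
            = (∑ k ∈ Finset.range ℓ, η k ⬝ᵥ ud (k + t)) + ξ ⬝ᵥ xd t := by
          simp only [Matrix.vecMul, dotProduct, hMdef, Matrix.of_apply]
          rw [Fintype.sum_sum_type]
          congr 1
          · rw [Fintype.sum_prod_type,
              Finset.sum_range (fun k => ∑ q : Fin nu, η k q * ud (k + t) q)]
            apply Finset.sum_congr rfl
            intro p _
            apply Finset.sum_congr rfl
            intro q _
            simp [hη]
        rw [hexp] at hcong
        simpa using hcong
      obtain ⟨hη0, hξ0⟩ := FL.core A B hctrb ud xd hxd ℓ hℓ hNn hPE η hηz ξ hveq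
      funext r
      cases r with
      | inl p =>
        have := congrFun (hη0 (p.1 : ℕ)) p.2
        simpa [hη, p.1.isLt] using this
      | inr i => exact congrFun hξ0 i
    obtain ⟨α, hα⟩ := hsurj (Sum.elim (fun p : Fin ℓ × Fin nu => u (p.1 : ℕ) p.2) (x 0))
    have hu : (hankel ℓ (N - ℓ + 1) ud).mulVec α = fun p => u (p.1 : ℕ) p.2 := by
      funext p
      exact congrFun hα (Sum.inl p)
    have huc : ∀ t, t < ℓ → u t = ∑ j : Fin (N - ℓ + 1), α j • ud (t + (j : ℕ)) := by
      intro t htl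
      funext q
      have := congrFun hu (⟨⟨t, htl⟩, q⟩ : Fin ℓ × Fin nu)
      rw [FL.hankel_mulVec] at this
      exact this.symm
    have hx0 : x 0 = ∑ j : Fin (N - ℓ + 1), α j • xd (0 + (j : ℕ)) := by
      funext i
      have h1 := congrFun hα (Sum.inr i)
      have h2 : (M *ᵥ α) (Sum.inr i) = (∑ j : Fin (N - ℓ + 1), α j • xd (0 + (j : ℕ))) i := by
        simp [hMdef, Matrix.mulVec, dotProduct, Finset.sum_apply, mul_comm]
      rw [h2] at h1
      exact h1.symm
    have hxeq : ∀ t, t < ℓ → x t = ∑ j : Fin (N - ℓ + 1), α j • xd (t + (j : ℕ)) := by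
      intro t
      induction t with
      | zero => intro _; exact hx0
      | succ t ih =>
        intro ht
        rw [hxrec t ht, ih (by omega), huc t (by omega), (hcombo α).1 t ht]
    refine ⟨α, hu, ?_⟩
    funext p
    rw [FL.hankel_mulVec]
    have hpl : (p.1 : ℕ) < ℓ := p.1.isLt
    rw [(hcombo α).2 (p.1 : ℕ) hpl]
    rw [← hxeq _ hpl, ← huc _ hpl, ← hxout _ hpl]
  · -- backward direction
    rintro ⟨α, hu, hy⟩
    refine ⟨fun t => ∑ j : Fin (N - ℓ + 1), α j • xd (t + (j : ℕ)), ?_, ?_⟩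
    · intro t ht
      have huc : u t = ∑ j : Fin (N - ℓ + 1), α j • ud (t + (j : ℕ)) := by
        funext q
        have := congrFun hu (⟨⟨t, by omega⟩, q⟩ : Fin ℓ × Fin nu)
        rw [FL.hankel_mulVec] at this
        exact this.symm
      rw [huc]
      exact (hcombo α).1 t ht
    · intro t ht
      have huc : u t = ∑ j : Fin (N - ℓ + 1), α j • ud (t + (j : ℕ)) := by
        funext q
        have := congrFun hu (⟨⟨t, ht⟩, q⟩ : Fin ℓ × Fin nu)
        rw [FL.hankel_mulVec] at this
        exact this.symm
      have hyc : y t = ∑ j : Fin (N - ℓ + 1), α j • yd (t + (j : ℕ)) := by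
        funext q
        have := congrFun hy (⟨⟨t, ht⟩, q⟩ : Fin ℓ × Fin ny)
        rw [FL.hankel_mulVec] at this
        exact this.symm
      rw [hyc, huc]
      exact (hcombo α).2 t ht
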